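/- For all partial Boolean functions f and g, randomized sabotage complexity composes perfectly in the lower-bound direction: RS(f ∘ g) ≥ RS(f) · RS(g). -/

import Mathlib

/-! ### Decision trees -/

/-- A deterministic decision tree querying positions of type `ι`, receiving answers
in `α`, and producing an output in `β`. -/
inductive DTree (ι α β : Type) : Type
  | leaf (b : β) : DTree ι α β
  | node (i : ι) (next : α → DTree ι α β) : DTree ι α β

namespace DTree

variable {ι α β : Type}

/-- The output of a decision tree on input `x`. -/
def output : DTree ι α β → (ι → α) → β
  | leaf b, _ => b
  | node i next, x => (next (x i)).output x

/-- The number of queries made by a decision tree on input `x`. -/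
def cost : DTree ι α β → (ι → α) → ℕ
  | leaf _, _ => 0
  | node i next, x => (next (x i)).cost x + 1

/-- The set of positions queried by a decision tree on input `x`. -/
def queries : DTree ι α β → (ι → α) → Set ι
  | leaf _, _ => ∅
  | node i next, x => insert i ((next (x i)).queries x)

end DTree

/-- A partial function on inputs `ι → α` with outputs in `β`; `none` means undefined
(the domain is the set of inputs mapped to `some` value). -/
abbrev PFn (ι α β : Type) := (ι → α) → Option β

/-- `t` computes the partial function `f` (correct on every input of the domain). -/
def DTree.computesP {ι α β : Type} (t : DTree ι α β) (f : PFn ι α β) : Prop :=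
  ∀ x b, f x = some b → t.output x = b

/-- Deterministic query complexity `D(f)`. -/
noncomputable def Dq {ι α β : Type} (f : PFn ι α β) : ℝ :=
  sInf {T : ℝ | 0 ≤ T ∧ ∃ t : DTree ι α β, t.computesP f ∧ ∀ x, (t.cost x : ℝ) ≤ T}

/-! ### Randomized query algorithms -/

/-- A randomized query algorithm: a finitely supported probability distribution over
deterministic decision trees. -/
structure RandAlg (ι α β : Type) where
  Ω : Type
  [fin : Fintype Ω]
  p : Ω → ℝ
  nonneg : ∀ ω, 0 ≤ p ω
  sum_one : ∑ ω, p ω = 1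
  tree : Ω → DTree ι α β

namespace RandAlg

variable {ι α β : Type}

/-- Expected number of queries of `A` on input `x`. -/
noncomputable def expCost (A : RandAlg ι α β) (x : ι → α) : ℝ :=
  letI := A.fin
  ∑ ω, A.p ω * ((A.tree ω).cost x : ℝ)

open Classical in
/-- Probability that `A` outputs `b` on input `x`. -/
noncomputable def succProb (A : RandAlg ι α β) (x : ι → α) (b : β) : ℝ :=
  letI := A.fin
  ∑ ω, if (A.tree ω).output x = b then A.p ω else 0

/-- `A` computes `f` with error at most `ε`: on every input of the domain the correct
output is produced with probability at least `1 - ε`. -/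
def Computes (A : RandAlg ι α β) (f : PFn ι α β) (ε : ℝ) : Prop :=
  ∀ x b, f x = some b → 1 - ε ≤ A.succProb x b

/-- The worst-case cost of `A` (over all inputs and all trees in the support) is at most `T`. -/
def WCostLe (A : RandAlg ι α β) (T : ℝ) : Prop :=
  ∀ ω, A.p ω ≠ 0 → ∀ x, ((A.tree ω).cost x : ℝ) ≤ T

/-- The expected cost of `A` on every input of the domain of `f` is at most `T`. -/
def ECostLe (A : RandAlg ι α β) (f : PFn ι α β) (T : ℝ) : Prop :=
  ∀ x, (f x).isSome → A.expCost x ≤ T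

end RandAlg

/-- `R_ε(f)`: minimum worst-case cost of an `ε`-error randomized algorithm for `f`. -/
noncomputable def Rw {ι α β : Type} (ε : ℝ) (f : PFn ι α β) : ℝ :=
  sInf {T : ℝ | 0 ≤ T ∧ ∃ A : RandAlg ι α β, A.Computes f ε ∧ A.WCostLe T}

/-- `R̄_ε(f)`: minimum expected cost of an `ε`-error randomized algorithm for `f`. -/
noncomputable def Rbar {ι α β : Type} (ε : ℝ) (f : PFn ι α β) : ℝ :=
  sInf {T : ℝ | 0 ≤ T ∧ ∃ A : RandAlg ι α β, A.Computes f ε ∧ A.ECostLe f T}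

/-- `R₀(f)`: zero-error expected randomized query complexity. -/
noncomputable def R0 {ι α β : Type} (f : PFn ι α β) : ℝ := Rbar 0 f

/-- `R(f) := R_{1/3}(f)`: bounded-error randomized query complexity. -/
noncomputable def Rb {ι α β : Type} (f : PFn ι α β) : ℝ := Rw (1/3) f

/-- The total function `f` viewed as a partial function. -/
def tot {ι α β : Type} (f : (ι → α) → β) : PFn ι α β := fun x => some (f x)


/-! ### Sabotage complexity and composition -/

/-- The four-letter alphabet `{0, 1, *, †}` of sabotaged inputs. -/
inductive Sab : Type
  | zero : Sab
  | one : Sab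
  | star : Sab
  | dagger : Sab
deriving DecidableEq

/-- Embedding of Boolean values into the sabotage alphabet. -/
def Sab.ofBool : Bool → Sab
  | false => Sab.zero
  | true => Sab.one

/-- `p` is consistent with the Boolean input `x`: wherever `p` has a Boolean entry,
it agrees with `x`. -/
def SabConsistent {ι : Type} (p : ι → Sab) (x : ι → Bool) : Prop :=
  ∀ i, p i = Sab.ofBool (x i) ∨ p i = Sab.star ∨ p i = Sab.dagger

/-- `p` is a sabotaged input for `f` using the sabotage symbol `s`: all entries of `p`
lie in `{0, 1, s}` and `p` is consistent with both a `0`-input and a `1`-input of `f`. -/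
def IsSabotaged {ι : Type} (f : PFn ι Bool Bool) (s : Sab) (p : ι → Sab) : Prop :=
  (∀ i, p i = Sab.zero ∨ p i = Sab.one ∨ p i = s) ∧
  ∃ x y, (f x).isSome ∧ (f y).isSome ∧ f x ≠ f y ∧ SabConsistent p x ∧ SabConsistent p y

open Classical in
/-- The sabotage problem `f_sab` associated with `f`: it is `0` on `P_f` (inputs
sabotaged with `*`) and `1` on `P_f†` (inputs sabotaged with `†`). -/
noncomputable def fsab {ι : Type} (f : PFn ι Bool Bool) : PFn ι Sab Bool :=
  fun p =>
    if IsSabotaged f Sab.star p then some false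
    else if IsSabotaged f Sab.dagger p then some true
    else none

open Classical in
/-- `f_usab`: the restriction of `f_sab` to inputs having exactly one `*` or `†` entry. -/
noncomputable def fusab {ι : Type} (f : PFn ι Bool Bool) : PFn ι Sab Bool :=
  fun p =>
    if ∃! i, p i = Sab.star ∨ p i = Sab.dagger then fsab f p else none

/-- Randomized sabotage complexity `RS(f) := R₀(f_sab)`. -/
noncomputable def RS {ι : Type} (f : PFn ι Bool Bool) : ℝ := R0 (fsab f)

/-- `RS_u(f) := R₀(f_usab)` (this is `0` automatically when `f_usab` has empty domain). -/
noncomputable def RSu {ι : Type} (f : PFn ι Bool Bool) : ℝ := R0 (fusab f)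

open Classical in
/-- Composition `f ∘ g` of partial functions: defined on an input exactly when every
inner copy of `g` is defined and the tuple of inner values lies in the domain of `f`. -/
noncomputable def pcomp {κ ι α β γ : Type} (f : PFn κ β γ) (g : PFn ι α β) :
    PFn (κ × ι) α γ :=
  fun x =>
    if h : ∀ i : κ, (g fun j => x (i, j)).isSome then
      f fun i => (g fun j => x (i, j)).get (h i)
    else none

/-- Index types for iterated self-composition. -/
def IterIdx (κ : Type) : ℕ → Type
  | 0 => κ
  | n + 1 => κ × IterIdx κ n

/-- `iterComp f n` is `f` composed with itself `n + 1` times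
(`iterComp f 0 = f`, `iterComp f (n+1) = f ∘ iterComp f n`). -/
noncomputable def iterComp {κ : Type} (f : PFn κ Bool Bool) : (n : ℕ) → PFn (IterIdx κ n) Bool Bool
  | 0 => f
  | n + 1 => pcomp f (iterComp f n)

/-! ### The index function -/

/-- The value of a bit-string read as a binary number (bit `i` has weight `2^i`). -/
def binval {b : ℕ} (x : Fin b → Bool) : ℕ := ∑ i, if x i then 2 ^ (i : ℕ) else 0

theorem sum_range_two_pow (b : ℕ) : ∑ i ∈ Finset.range b, 2 ^ i = 2 ^ b - 1 := by
  induction b with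
  | zero => simp
  | succ n ih =>
    rw [Finset.sum_range_succ, ih, pow_succ]
    have : 1 ≤ 2 ^ n := Nat.one_le_two_pow
    omega

theorem binval_lt {b : ℕ} (x : Fin b → Bool) : binval x < 2 ^ b := by
  have h1 : binval x ≤ ∑ i : Fin b, 2 ^ (i : ℕ) := by
    refine Finset.sum_le_sum fun i _ => ?_
    split <;> simp
  have h2 : ∑ i : Fin b, 2 ^ (i : ℕ) = 2 ^ b - 1 := by
    rw [Fin.sum_univ_eq_sum_range (fun i => 2 ^ i) b]
    exact sum_range_two_pow b
  have h3 : 0 < 2 ^ b := Nat.pow_pos (by norm_num)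
  omega

/-- The largest `c` with `c + 2^c ≤ m`. -/
def indexC (m : ℕ) : ℕ := Nat.findGreatest (fun c => c + 2 ^ c ≤ m) m

/-- The index function `Ind_m : {0,1}^m → {0,1}`: the first `c` bits (where `c` is the
largest integer with `c + 2^c ≤ m`) are read as a binary address `y` into the next
`2^c` bits, and the output is the addressed bit. -/
def IndFn (m : ℕ) : PFn (Fin m) Bool Bool :=
  fun x =>
    let c := indexC m
    let y := ∑ i : Fin m, if (i : ℕ) < c ∧ x i = true then 2 ^ (i : ℕ) else 0
    if h : c + y < m then some (x ⟨c + y, h⟩) else none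

/-- `f^{⊕c}_ind`: the index function on `c + 2^c` bits with `f` composed into each of
the `c` address bits only. -/
def findex {n : ℕ} (f : PFn (Fin n) Bool Bool) (c : ℕ) :
    PFn ((Fin c × Fin n) ⊕ Fin (2 ^ c)) Bool Bool :=
  fun x =>
    if h : ∀ i : Fin c, (f fun j => x (Sum.inl (i, j))).isSome then
      some (x (Sum.inr ⟨binval fun i => (f fun j => x (Sum.inl (i, j))).get (h i),
        binval_lt _⟩))
    else none


/-! ### Auxiliary development for the composition theorem -/

namespace RSComp

open DTree
open scoped Classical

instance : Fintype Sab :=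
  ⟨⟨[Sab.zero, Sab.one, Sab.star, Sab.dagger], by decide⟩, by intro x; cases x <;> decide⟩

theorem ofBool_ne_star (b : Bool) : Sab.ofBool b ≠ Sab.star := by cases b <;> simp [Sab.ofBool]

theorem ofBool_ne_dagger (b : Bool) : Sab.ofBool b ≠ Sab.dagger := by
  cases b <;> simp [Sab.ofBool]

theorem ofBool_inj {a b : Bool} (h : Sab.ofBool a = Sab.ofBool b) : a = b := by
  cases a <;> cases b <;> simp_all [Sab.ofBool]

/-- Zero-error: every tree in the support is correct on every domain input. -/
theorem support_correct {ι α β : Type} (A : RandAlg ι α β) (f : PFn ι α β)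
    (hA : A.Computes f 0) {x : ι → α} {b : β} (hx : f x = some b) :
    ∀ ω, A.p ω ≠ 0 → (A.tree ω).output x = b := by
  letI := A.fin
  intro ω hω
  by_contra hne
  have h1 := hA x b hx
  rw [RandAlg.succProb] at h1
  have hle : (∑ ω', if (A.tree ω').output x = b then A.p ω' else 0)
      ≤ ∑ ω', (A.p ω' - if ω' = ω then A.p ω else 0) := by
    refine Finset.sum_le_sum fun ω' _ => ?_
    by_cases h' : ω' = ω
    · subst h'
      simp only [if_neg hne, if_pos rfl]
      simp
    · simp only [if_neg h', sub_zero]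
      split_ifs
      · exact le_rfl
      · exact A.nonneg ω'
  rw [Finset.sum_sub_distrib, A.sum_one, Finset.sum_ite_eq' Finset.univ ω (fun _ => A.p ω),
    if_pos (Finset.mem_univ ω)] at hle
  have := A.nonneg ω
  have : A.p ω = 0 := by linarith
  exact hω this

theorem computes_of_support {ι α β : Type} (A : RandAlg ι α β) (f : PFn ι α β)
    (h : ∀ x b, f x = some b → ∀ ω, A.p ω ≠ 0 → (A.tree ω).output x = b) :
    A.Computes f 0 := by
  intro x b hx
  letI := A.fin
  rw [RandAlg.succProb]
  have : (∑ ω, if (A.tree ω).output x = b then A.p ω else 0) = ∑ ω, A.p ω := by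
    refine Finset.sum_congr rfl fun ω _ => ?_
    by_cases hω : A.p ω = 0
    · simp [hω]
    · rw [if_pos (h x b hx ω hω)]
  rw [this, A.sum_one]
  norm_num

theorem R0_nonneg {ι α β : Type} (f : PFn ι α β) : 0 ≤ R0 f :=
  Real.sInf_nonneg fun _ hx => hx.1

theorem R0_le {ι α β : Type} (f : PFn ι α β) {T : ℝ} (hT : 0 ≤ T) (A : RandAlg ι α β)
    (h1 : A.Computes f 0) (h2 : A.ECostLe f T) : R0 f ≤ T :=
  csInf_le ⟨0, fun _ hx => hx.1⟩ ⟨hT, A, h1, h2⟩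

theorem RS_nonneg {ι : Type} (f : PFn ι Bool Bool) : 0 ≤ RS f := R0_nonneg _


/-! ### Domain facts and the query-everything tree -/

theorem exists_symbol {ι : Type} {h : PFn ι Bool Bool} {s : Sab} {q : ι → Sab}
    (hq : IsSabotaged h s q) : ∃ i, q i = s := by
  by_contra hcon
  push_neg at hcon
  obtain ⟨hent, x, y, hx, hy, hxy, hcx, hcy⟩ := hq
  have hb : ∀ z : ι → Bool, SabConsistent q z → ∀ i, q i = Sab.ofBool (z i) := by
    intro z hz i
    rcases hz i with h' | h' | h'
    · exact h'
    · rcases hent i with h'' | h'' | h'' <;> simp_all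
    · rcases hent i with h'' | h'' | h'' <;> simp_all
  have hxy' : x = y := by
    funext i
    exact ofBool_inj ((hb x hcx i).symm.trans (hb y hcy i))
  exact hxy (by rw [hxy'])

theorem isSab_no_other {ι : Type} {h : PFn ι Bool Bool} {q : ι → Sab}
    (hq : IsSabotaged h Sab.dagger q) : ∀ i, q i ≠ Sab.star := by
  intro i hi
  rcases hq.1 i with h' | h' | h' <;> simp_all

theorem isSab_no_dagger {ι : Type} {h : PFn ι Bool Bool} {q : ι → Sab}
    (hq : IsSabotaged h Sab.star q) : ∀ i, q i ≠ Sab.dagger := by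
  intro i hi
  rcases hq.1 i with h' | h' | h' <;> simp_all

/-- fsab value on star inputs. -/
theorem fsab_star {ι : Type} {g : PFn ι Bool Bool} {q : ι → Sab}
    (h : IsSabotaged g Sab.star q) : fsab g q = some false := by
  rw [fsab, if_pos h]

theorem fsab_dagger {ι : Type} {g : PFn ι Bool Bool} {q : ι → Sab}
    (h : IsSabotaged g Sab.dagger q) : fsab g q = some true := by
  have : ¬ IsSabotaged g Sab.star q := by
    intro h'
    obtain ⟨i, hi⟩ := exists_symbol h'
    exact isSab_no_other h i hi
  rw [fsab, if_neg this, if_pos h]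

theorem fsab_cases {ι : Type} {g : PFn ι Bool Bool} {q : ι → Sab} {b : Bool}
    (h : fsab g q = some b) :
    (IsSabotaged g Sab.star q ∧ b = false) ∨ (IsSabotaged g Sab.dagger q ∧ b = true) := by
  by_cases h1 : IsSabotaged g Sab.star q
  · rw [fsab, if_pos h1] at h
    exact Or.inl ⟨h1, (Option.some_inj.mp h).symm⟩
  by_cases h2 : IsSabotaged g Sab.dagger q
  · rw [fsab, if_neg h1, if_pos h2] at h
    exact Or.inr ⟨h2, (Option.some_inj.mp h).symm⟩
  · rw [fsab, if_neg h1, if_neg h2] at h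
    simp at h

theorem dom_star_entry {ι : Type} {g : PFn ι Bool Bool} {q : ι → Sab} {b : Bool}
    (h : fsab g q = some b) {i : ι} (hi : q i = Sab.star) : b = false := by
  rcases fsab_cases h with ⟨_, hb⟩ | ⟨hs, _⟩
  · exact hb
  · exact absurd hi (isSab_no_other hs i)

theorem dom_dagger_entry {ι : Type} {g : PFn ι Bool Bool} {q : ι → Sab} {b : Bool}
    (h : fsab g q = some b) {i : ι} (hi : q i = Sab.dagger) : b = true := by
  rcases fsab_cases h with ⟨hs, _⟩ | ⟨_, hb⟩
  · exact absurd hi (isSab_no_dagger hs i)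
  · exact hb

/-- Replacing daggers by stars. -/
noncomputable def starify {ι : Type} (q : ι → Sab) : ι → Sab := fun i =>
  if q i = Sab.dagger then Sab.star else q i

theorem starify_isSab {ι : Type} {h : PFn ι Bool Bool} {q : ι → Sab}
    (hq : IsSabotaged h Sab.dagger q) : IsSabotaged h Sab.star (starify q) := by
  obtain ⟨hent, x, y, hx, hy, hxy, hcx, hcy⟩ := hq
  refine ⟨fun i => ?_, x, y, hx, hy, hxy, fun i => ?_, fun i => ?_⟩
  · rcases hent i with h' | h' | h' <;> simp [starify, h']
  · rcases hcx i with h' | h' | h'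
    · left; simp only [starify]; rw [if_neg (by rw [h']; exact ofBool_ne_dagger _), h']
    · right; left; simp [starify, h']
    · right; left; simp [starify, h']
  · rcases hcy i with h' | h' | h'
    · left; simp only [starify]; rw [if_neg (by rw [h']; exact ofBool_ne_dagger _), h']
    · right; left; simp [starify, h']
    · right; left; simp [starify, h']

/-- The tree that queries everything. -/
noncomputable def allTree {ι : Type} [DecidableEq ι] :
    List ι → (ι → Option Sab) → DTree ι Sab Bool
  | [], acc => DTree.leaf (if ∃ i, acc i = some Sab.star then false else true)
  | i :: L, acc => DTree.node i fun a => allTree L (Function.update acc i (some a))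

theorem allTree_cost {ι : Type} [DecidableEq ι] (x : ι → Sab) :
    ∀ (L : List ι) (acc : ι → Option Sab), (allTree L acc).cost x = L.length := by
  intro L
  induction L with
  | nil => intro acc; rfl
  | cons i L ih => intro acc; simp [allTree, DTree.cost, ih]

theorem allTree_output {ι : Type} [DecidableEq ι] (x : ι → Sab) :
    ∀ (L : List ι) (acc : ι → Option Sab),
      (∀ i, i ∈ L ∨ acc i = some (x i)) →
      (allTree L acc).output x = if ∃ i, x i = Sab.star then false else true := by
  intro L
  induction L with
  | nil =>
    intro acc hacc
    have hfull : ∀ i, acc i = some (x i) := by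
      intro i; rcases hacc i with h | h
      · simp at h
      · exact h
    have : (∃ i, acc i = some Sab.star) ↔ ∃ i, x i = Sab.star := by
      constructor
      · rintro ⟨i, hi⟩; exact ⟨i, by rw [hfull i] at hi; exact Option.some_inj.mp hi⟩
      · rintro ⟨i, hi⟩; exact ⟨i, by rw [hfull i, hi]⟩
    simp only [allTree, DTree.output]
    split_ifs with h1 h2 h2 <;> tauto
  | cons i L ih =>
    intro acc hacc
    show (allTree L (Function.update acc i (some (x i)))).output x = _
    refine ih _ fun j => ?_
    by_cases hj : j = i
    · subst hj; right; simp
    · rcases hacc j with h | h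
      · rcases List.mem_cons.mp h with h' | h'
        · exact absurd h' hj
        · exact Or.inl h'
      · right; rw [Function.update_of_ne hj, h]

theorem allTree_correct {ι : Type} [Fintype ι] [DecidableEq ι] (g : PFn ι Bool Bool)
    {q : ι → Sab} {b : Bool} (hq : fsab g q = some b) :
    (allTree Finset.univ.toList (fun _ => none)).output q = b := by
  rw [allTree_output q _ _ (fun i => Or.inl (by simp))]
  rcases fsab_cases hq with ⟨hs, hb⟩ | ⟨hs, hb⟩
  · rw [if_pos (exists_symbol hs), hb]
  · rw [if_neg, hb]
    rintro ⟨i, hi⟩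
    exact isSab_no_other hs i hi
/-! ### Searchers -/

/-- Queries made by a searcher until (and including) its first query to a symbol position. -/
def sCost {ι : Type} : DTree ι Sab Unit → (ι → Sab) → ℕ
  | DTree.leaf _, _ => 0
  | DTree.node i next, q =>
    if q i = Sab.star ∨ q i = Sab.dagger then 1 else sCost (next (q i)) q + 1

/-- Whether a searcher ever queries a symbol position. -/
def hitS {ι : Type} : DTree ι Sab Unit → (ι → Sab) → Bool
  | DTree.leaf _, _ => false
  | DTree.node i next, q =>
    if q i = Sab.star ∨ q i = Sab.dagger then true else hitS (next (q i)) q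

theorem starify_sCost {ι : Type} (σ : DTree ι Sab Unit) (q : ι → Sab) :
    sCost σ (starify q) = sCost σ q ∧ hitS σ (starify q) = hitS σ q := by
  induction σ with
  | leaf b => exact ⟨rfl, rfl⟩
  | node i next ih =>
    by_cases h : q i = Sab.star ∨ q i = Sab.dagger
    · have h' : starify q i = Sab.star := by
        rcases h with h | h <;> simp [starify, h]
      constructor <;> simp [sCost, hitS, h, h']
    · have h' : starify q i = q i := by
        push_neg at h
        simp [starify, h.2]
      refine ⟨?_, ?_⟩ <;> simp only [sCost, hitS, h', if_neg h]
      · rw [(ih (q i)).1]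
      · rw [(ih (q i)).2]

/-- Converting a searcher into a solver with a fallback. -/
noncomputable def toSolver {ι : Type} : DTree ι Sab Unit → DTree ι Sab Bool → DTree ι Sab Bool
  | DTree.leaf _, fb => fb
  | DTree.node i next, fb => DTree.node i fun a =>
      match a with
      | Sab.star => DTree.leaf false
      | Sab.dagger => DTree.leaf true
      | Sab.zero => toSolver (next Sab.zero) fb
      | Sab.one => toSolver (next Sab.one) fb

theorem toSolver_cost {ι : Type} (σ : DTree ι Sab Unit) (fb : DTree ι Sab Bool) (q : ι → Sab) :
    (toSolver σ fb).cost q = sCost σ q + (if hitS σ q then 0 else fb.cost q) := by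
  induction σ with
  | leaf b => simp [toSolver, sCost, hitS]
  | node i next ih =>
    rcases hq : q i with h | h | h | h <;>
      simp only [toSolver, DTree.cost, sCost, hitS, hq] <;> simp [ih, hq]
    · split_ifs <;> omega
    · split_ifs <;> omega

theorem toSolver_output_hit {ι : Type} (σ : DTree ι Sab Unit) (fb : DTree ι Sab Bool)
    (q : ι → Sab) (h : hitS σ q = true) :
    ∃ i, (q i = Sab.star ∧ (toSolver σ fb).output q = false) ∨
         (q i = Sab.dagger ∧ (toSolver σ fb).output q = true) := by
  induction σ with
  | leaf b => simp [hitS] at h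
  | node i next ih =>
    rcases hq : q i with h' | h' | h' | h'
    · simp only [hitS, hq] at h
      rw [if_neg (by simp)] at h
      obtain ⟨j, hj⟩ := ih Sab.zero h
      exact ⟨j, by simpa [toSolver, DTree.output, hq] using hj⟩
    · simp only [hitS, hq] at h
      rw [if_neg (by simp)] at h
      obtain ⟨j, hj⟩ := ih Sab.one h
      exact ⟨j, by simpa [toSolver, DTree.output, hq] using hj⟩
    · exact ⟨i, Or.inl ⟨hq, by simp [toSolver, DTree.output, hq]⟩⟩
    · exact ⟨i, Or.inr ⟨hq, by simp [toSolver, DTree.output, hq]⟩⟩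

theorem toSolver_output_miss {ι : Type} (σ : DTree ι Sab Unit) (fb : DTree ι Sab Bool)
    (q : ι → Sab) (h : hitS σ q = false) :
    (toSolver σ fb).output q = fb.output q := by
  induction σ with
  | leaf b => rfl
  | node i next ih =>
    rcases hq : q i with h' | h' | h' | h' <;> simp only [hitS, hq] at h <;>
      simp only [toSolver, DTree.output, hq]
    · rw [if_neg (by simp)] at h; exact ih _ h
    · rw [if_neg (by simp)] at h; exact ih _ h
    · rw [if_pos (by simp)] at h; simp at h
    · rw [if_pos (by simp)] at h; simp at h

/-- Iterated searcher with query-everything fallback. -/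
noncomputable def iterSolver {ι : Type} [Fintype ι] [DecidableEq ι] :
    (N : ℕ) → (Fin N → DTree ι Sab Unit) → DTree ι Sab Bool
  | 0, _ => allTree Finset.univ.toList (fun _ => none)
  | N + 1, σs => toSolver (σs 0) (iterSolver N (fun k => σs k.succ))

theorem iterSolver_correct {ι : Type} [Fintype ι] [DecidableEq ι] (g : PFn ι Bool Bool)
    {q : ι → Sab} {b : Bool} (hq : fsab g q = some b) :
    ∀ (N : ℕ) (σs : Fin N → DTree ι Sab Unit), (iterSolver N σs).output q = b := by
  intro N
  induction N with
  | zero => intro σs; exact allTree_correct g hq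
  | succ N ih =>
    intro σs
    rcases hh : hitS (σs 0) q with hf | ht
    · rw [iterSolver, toSolver_output_miss _ _ _ hh]
      exact ih _
    · obtain ⟨i, hi⟩ := toSolver_output_hit (σs 0) (iterSolver N (fun k => σs k.succ)) q hh
      rcases hi with ⟨hqi, ho⟩ | ⟨hqi, ho⟩
      · rw [iterSolver, ho, dom_star_entry hq hqi]
      · rw [iterSolver, ho, dom_dagger_entry hq hqi]
/-! ### Amplification: no mixed searcher beats `RS g` -/

theorem sum_prod_pow {S : Type} [Fintype S] (w : S → ℝ) :
    ∀ N : ℕ, (∑ v : Fin N → S, ∏ k, w (v k)) = (∑ l, w l) ^ N := by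
  intro N
  induction N with
  | zero => simp
  | succ N ih =>
    rw [← Equiv.sum_comp (Fin.consEquiv (fun _ : Fin (N + 1) => S))
        (fun v => ∏ k, w (v k)), Fintype.sum_prod_type]
    have hterm : ∀ (l : S) (v : Fin N → S),
        (∏ k, w ((Fin.consEquiv (fun _ : Fin (N + 1) => S)) (l, v) k))
          = w l * ∏ k, w (v k) := by
      intro l v
      rw [Fin.prod_univ_succ]
      simp [Fin.consEquiv]
    calc (∑ l : S, ∑ v : Fin N → S,
            ∏ k, w ((Fin.consEquiv (fun _ : Fin (N + 1) => S)) (l, v) k))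
        = ∑ l : S, ∑ v : Fin N → S, w l * ∏ k, w (v k) := by
          exact Finset.sum_congr rfl fun l _ => Finset.sum_congr rfl fun v _ => hterm l v
      _ = (∑ l : S, w l) * ∑ v : Fin N → S, ∏ k, w (v k) := by
          rw [Finset.sum_mul]
          exact Finset.sum_congr rfl fun l _ => (Finset.mul_sum _ _ _).symm
      _ = (∑ l : S, w l) ^ (N + 1) := by rw [ih, pow_succ]; ring

theorem mixed_searcher_lb {ι : Type} [Fintype ι] [DecidableEq ι] (g : PFn ι Bool Bool)
    {ιΛ : Type} (t : Finset ιΛ) (w : ιΛ → ℝ) (σ : ιΛ → DTree ι Sab Unit)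
    (hw0 : ∀ l ∈ t, 0 ≤ w l) (hw1 : ∑ l ∈ t, w l = 1)
    (hne : ∃ q₀, IsSabotaged g Sab.star q₀)
    (hcon : ∀ q, IsSabotaged g Sab.star q →
      (∑ l ∈ t, w l * ((sCost (σ l) q : ℝ) - RS g * (if hitS (σ l) q then 1 else 0))) < 0) :
    False := by
  classical
  obtain ⟨q₀, hq₀⟩ := hne
  set S := {l // l ∈ t}
  set w' : S → ℝ := fun l => w l.1 with hw'
  set σ' : S → DTree ι Sab Unit := fun l => σ l.1 with hσ'
  have hw0' : ∀ l : S, 0 ≤ w' l := fun l => hw0 l.1 l.2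
  have hw1' : ∑ l : S, w' l = 1 := by rw [Finset.sum_coe_sort]; exact hw1
  set c : (ι → Sab) → ℝ := fun q => ∑ l : S, w' l * (sCost (σ' l) q : ℝ) with hc
  set hh : (ι → Sab) → ℝ := fun q => ∑ l : S, w' l * (if hitS (σ' l) q then 1 else 0) with hhh
  have hcpos : ∀ q, 0 ≤ c q := fun q =>
    Finset.sum_nonneg fun l _ => mul_nonneg (hw0' l) (Nat.cast_nonneg _)
  have hhpos : ∀ q, 0 ≤ hh q := fun q =>
    Finset.sum_nonneg fun l _ => mul_nonneg (hw0' l) (by split_ifs <;> norm_num)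
  have hhle : ∀ q, hh q ≤ 1 := by
    intro q
    rw [← hw1']
    exact Finset.sum_le_sum fun l _ => by
      rcases eq_or_lt_of_le (hw0' l) with h | h
      · rw [← h]; simp
      · split_ifs <;> nlinarith
  have hconS : ∀ q, IsSabotaged g Sab.star q → c q - RS g * hh q < 0 := by
    intro q hq
    have := hcon q hq
    rw [← Finset.sum_coe_sort t
      (fun l => w l * ((sCost (σ l) q : ℝ) - RS g * (if hitS (σ l) q then 1 else 0)))] at this
    calc c q - RS g * hh q
        = ∑ l : S, w' l * ((sCost (σ' l) q : ℝ) - RS g * (if hitS (σ' l) q then 1 else 0)) := by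
          rw [hc, hhh, Finset.mul_sum, ← Finset.sum_sub_distrib]
          exact Finset.sum_congr rfl fun l _ => by ring
      _ < 0 := this
  -- extend to the whole domain via starify
  have hcon' : ∀ q, (fsab g q).isSome → c q - RS g * hh q < 0 := by
    intro q hq
    obtain ⟨b, hb⟩ := Option.isSome_iff_exists.mp hq
    rcases fsab_cases hb with ⟨hs, _⟩ | ⟨hs, _⟩
    · exact hconS q hs
    · have h1 : c (starify q) = c q :=
        Finset.sum_congr rfl fun l _ => by rw [(starify_sCost (σ' l) q).1]
      have h2 : hh (starify q) = hh q :=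
        Finset.sum_congr rfl fun l _ => by rw [(starify_sCost (σ' l) q).2]
      rw [← h1, ← h2]
      exact hconS _ (starify_isSab hs)
  have hdom₀ : (fsab g q₀).isSome := by rw [fsab_star hq₀]; rfl
  have hRS0 : 0 ≤ RS g := RS_nonneg g
  have hRSpos : 0 < RS g := by
    have := hcon' q₀ hdom₀
    nlinarith [hcpos q₀, hhpos q₀, hhle q₀]
  set DomF : Finset (ι → Sab) := Finset.univ.filter (fun q => (fsab g q).isSome) with hDomF
  have hmemD : ∀ q, (fsab g q).isSome → q ∈ DomF := fun q hq =>
    Finset.mem_filter.mpr ⟨Finset.mem_univ q, hq⟩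
  have hD₀ : q₀ ∈ DomF := hmemD q₀ hdom₀
  have hDne : DomF.Nonempty := ⟨q₀, hD₀⟩
  have hmemD' : ∀ q ∈ DomF, (fsab g q).isSome := fun q hq => (Finset.mem_filter.mp hq).2
  set δ : ℝ := DomF.inf' hDne (fun q => RS g * hh q - c q) with hδ
  have hδpos : 0 < δ := by
    rw [hδ, Finset.lt_inf'_iff]
    intro q hq
    have := hcon' q (hmemD' q hq)
    linarith
  have hδle : ∀ q ∈ DomF, δ ≤ RS g * hh q - c q := fun q hq => Finset.inf'_le _ hq
  have hδRS : δ ≤ RS g := by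
    have := hδle q₀ hD₀
    nlinarith [hcpos q₀, hhle q₀]
  set h₀ : ℝ := DomF.inf' hDne hh with hh₀
  have hh₀pos : 0 < h₀ := by
    rw [hh₀, Finset.lt_inf'_iff]
    intro q hq
    have h1 := hcon' q (hmemD' q hq)
    nlinarith [hcpos q]
  have hh₀le : ∀ q ∈ DomF, h₀ ≤ hh q := fun q hq => Finset.inf'_le _ hq
  have hh₀1 : h₀ ≤ 1 := le_trans (hh₀le q₀ hD₀) (hhle q₀)
  set r : ℝ := 1 - h₀ with hr
  have hr0 : 0 ≤ r := by linarith
  have hr1 : r < 1 := by linarith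
  set M : ℝ := (Fintype.card ι : ℝ) with hM
  have hM0 : 0 ≤ M := Nat.cast_nonneg _
  -- expected cost bound for the iterated solver
  have key : ∀ (N : ℕ) (q : ι → Sab), (fsab g q).isSome →
      (∑ v : Fin N → S, (∏ k, w' (v k)) *
        ((iterSolver N (fun k => σ' (v k))).cost q : ℝ)) ≤ (RS g - δ) + r ^ N * M := by
    intro N
    induction N with
    | zero =>
      intro q _
      have : ∀ v : Fin 0 → S, (∏ k, w' (v k)) *
          ((iterSolver 0 (fun k => σ' (v k))).cost q : ℝ) = M := by
        intro v
        rw [show (iterSolver 0 (fun k => σ' (v k))) = allTree Finset.univ.toList (fun _ => none)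
          from rfl, allTree_cost, Finset.length_toList]
        simp [hM]
      calc (∑ v : Fin 0 → S, (∏ k, w' (v k)) *
              ((iterSolver 0 (fun k => σ' (v k))).cost q : ℝ))
          = ∑ _v : Fin 0 → S, M := Finset.sum_congr rfl fun v _ => this v
        _ = M := by simp
        _ ≤ (RS g - δ) + r ^ 0 * M := by rw [pow_zero, one_mul]; linarith
    | succ N ih =>
      intro q hq
      have hEN0 : 0 ≤ ∑ v : Fin N → S, (∏ k, w' (v k)) *
          ((iterSolver N (fun k => σ' (v k))).cost q : ℝ) :=
        Finset.sum_nonneg fun v _ => mul_nonneg (Finset.prod_nonneg fun k _ => hw0' _)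
          (Nat.cast_nonneg _)
      set EN : ℝ := ∑ v : Fin N → S, (∏ k, w' (v k)) *
          ((iterSolver N (fun k => σ' (v k))).cost q : ℝ) with hEN
      have hsum1 : (∑ v : Fin N → S, ∏ k, w' (v k)) = 1 := by
        rw [sum_prod_pow, hw1', one_pow]
      have expand : (∑ v : Fin (N + 1) → S, (∏ k, w' (v k)) *
          ((iterSolver (N + 1) (fun k => σ' (v k))).cost q : ℝ))
          = c q + (1 - hh q) * EN := by
        rw [← Equiv.sum_comp (Fin.consEquiv (fun _ : Fin (N + 1) => S))
          (fun v => (∏ k, w' (v k)) * ((iterSolver (N + 1) (fun k => σ' (v k))).cost q : ℝ)),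
          Fintype.sum_prod_type]
        have hterm : ∀ (l : S) (v : Fin N → S),
            ((∏ k, w' (((Fin.consEquiv (fun _ : Fin (N + 1) => S)) (l, v)) k)) *
              ((iterSolver (N + 1)
                (fun k => σ' (((Fin.consEquiv (fun _ : Fin (N + 1) => S)) (l, v)) k))).cost q : ℝ))
            = (w' l * ∏ k, w' (v k)) * ((sCost (σ' l) q : ℝ) +
                if hitS (σ' l) q then 0 else ((iterSolver N (fun k => σ' (v k))).cost q : ℝ)) := by
          intro l v
          have h1 : (∏ k, w' (((Fin.consEquiv (fun _ : Fin (N + 1) => S)) (l, v)) k))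
              = w' l * ∏ k, w' (v k) := by
            rw [Fin.prod_univ_succ]; simp [Fin.consEquiv]
          have h2 : (iterSolver (N + 1)
              (fun k => σ' (((Fin.consEquiv (fun _ : Fin (N + 1) => S)) (l, v)) k)))
              = toSolver (σ' l) (iterSolver N (fun k => σ' (v k))) := by
            simp [iterSolver, Fin.consEquiv]
          rw [h1, h2, toSolver_cost]
          push_cast
          split_ifs <;> ring
        calc (∑ l : S, ∑ v : Fin N → S, _) = ∑ l : S, ∑ v : Fin N → S,
              (w' l * ∏ k, w' (v k)) * ((sCost (σ' l) q : ℝ) +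
                if hitS (σ' l) q then 0 else ((iterSolver N (fun k => σ' (v k))).cost q : ℝ)) :=
              Finset.sum_congr rfl fun l _ => Finset.sum_congr rfl fun v _ => hterm l v
          _ = c q + (1 - hh q) * EN := by
              have hl : ∀ l : S, (∑ v : Fin N → S,
                  (w' l * ∏ k, w' (v k)) * ((sCost (σ' l) q : ℝ) +
                    if hitS (σ' l) q then 0 else ((iterSolver N (fun k => σ' (v k))).cost q : ℝ)))
                  = w' l * (sCost (σ' l) q : ℝ) +
                    w' l * (if hitS (σ' l) q then 0 else EN) := by
                intro l
                by_cases hl' : hitS (σ' l) q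
                · simp only [if_pos hl']
                  rw [← Finset.sum_mul]
                  calc (∑ v : Fin N → S, (w' l * ∏ k, w' (v k))) *
                        ((sCost (σ' l) q : ℝ) + 0)
                      = (w' l * ∑ v : Fin N → S, ∏ k, w' (v k)) * (sCost (σ' l) q : ℝ) := by
                        rw [← Finset.mul_sum]; ring
                    _ = w' l * (sCost (σ' l) q : ℝ) + w' l * 0 := by
                        rw [hsum1]; ring
                · simp only [if_neg hl']
                  calc (∑ v : Fin N → S, (w' l * ∏ k, w' (v k)) * ((sCost (σ' l) q : ℝ) +
                        ((iterSolver N (fun k => σ' (v k))).cost q : ℝ)))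
                      = ∑ v : Fin N → S,
                          (w' l * ((∏ k, w' (v k)) * (sCost (σ' l) q : ℝ)) +
                          w' l * ((∏ k, w' (v k)) *
                            ((iterSolver N (fun k => σ' (v k))).cost q : ℝ))) :=
                        Finset.sum_congr rfl fun v _ => by ring
                    _ = w' l * (∑ v : Fin N → S, (∏ k, w' (v k)) * (sCost (σ' l) q : ℝ)) +
                        w' l * EN := by
                        rw [Finset.sum_add_distrib, ← Finset.mul_sum, ← Finset.mul_sum, ← hEN]
                    _ = w' l * (sCost (σ' l) q : ℝ) + w' l * EN := by
                        rw [← Finset.sum_mul, hsum1, one_mul]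
              rw [Finset.sum_congr rfl fun l _ => hl l, Finset.sum_add_distrib]
              have e1 : (∑ l : S, w' l * (sCost (σ' l) q : ℝ)) = c q := rfl
              have e2 : (∑ l : S, w' l * (if hitS (σ' l) q then 0 else EN))
                  = (1 - hh q) * EN := by
                have : ∀ l : S, w' l * (if hitS (σ' l) q then 0 else EN)
                    = (w' l - w' l * (if hitS (σ' l) q then 1 else 0)) * EN := by
                  intro l; split_ifs <;> ring
                rw [Finset.sum_congr rfl fun l _ => this l, ← Finset.sum_mul,
                  Finset.sum_sub_distrib, hw1']
              rw [e1, e2]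
      rw [expand]
      have hqD := hmemD q hq
      have b1 : c q ≤ RS g * hh q - δ := by have := hδle q hqD; linarith
      have b2 : h₀ ≤ hh q := hh₀le q hqD
      have b3 : hh q ≤ 1 := hhle q
      have b4 : EN ≤ (RS g - δ) + r ^ N * M := ih q hq
      have b5 : (0:ℝ) ≤ r ^ N := pow_nonneg hr0 N
      have b6 : (0:ℝ) ≤ r ^ N * M := mul_nonneg b5 hM0
      have hrs : r ^ (N + 1) = r * r ^ N := by rw [pow_succ]; ring
      nlinarith [mul_nonneg (sub_nonneg.mpr b3) (sub_nonneg.mpr (by linarith : δ ≤ RS g)),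
        mul_le_mul_of_nonneg_right b2 b6]
  -- choose N and derive the contradiction
  obtain ⟨N, hN⟩ := exists_pow_lt_of_lt_one (show (0:ℝ) < δ / (2 * (M + 1)) by positivity) hr1
  have hrNM : r ^ N * M ≤ δ / 2 := by
    have h1 : r ^ N * M ≤ (δ / (2 * (M + 1))) * M :=
      mul_le_mul_of_nonneg_right (le_of_lt hN) hM0
    have h2 : (δ / (2 * (M + 1))) * M ≤ δ / 2 := by
      rw [div_mul_eq_mul_div, div_le_div_iff₀ (by positivity) (by norm_num)]
      nlinarith
    linarith
  set AN : RandAlg ι Sab Bool :=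
    { Ω := Fin N → S
      p := fun v => ∏ k, w' (v k)
      nonneg := fun v => Finset.prod_nonneg fun k _ => hw0' _
      sum_one := by rw [sum_prod_pow, hw1', one_pow]
      tree := fun v => iterSolver N (fun k => σ' (v k)) } with hAN
  have hcomp : AN.Computes (fsab g) 0 :=
    computes_of_support _ _ fun x b hx ω _ => iterSolver_correct g hx N _
  have hecost : AN.ECostLe (fsab g) (RS g - δ / 2) := by
    intro x hx
    have h1 := key N x hx
    have h2 : AN.expCost x = ∑ v : Fin N → S, (∏ k, w' (v k)) *
        ((iterSolver N (fun k => σ' (v k))).cost x : ℝ) := rfl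
    rw [h2]
    linarith
  have : RS g ≤ RS g - δ / 2 :=
    R0_le (fsab g) (by linarith) AN hcomp hecost
  linarith
/-! ### A hard distribution for the sabotage problem via separation -/

theorem exists_hard_dist {ι : Type} [Fintype ι] [DecidableEq ι] (g : PFn ι Bool Bool)
    (hne : ∃ q₀, IsSabotaged g Sab.star q₀) :
    ∃ D : {q : ι → Sab // (fsab g q).isSome} → ℝ,
      (∀ q, 0 ≤ D q) ∧ (∑ q, D q = 1) ∧
      ∀ σ : DTree ι Sab Unit,
        RS g * (∑ q, D q * (if hitS σ q.1 then 1 else 0)) ≤ ∑ q, D q * (sCost σ q.1 : ℝ) := by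
  classical
  set QT := {q : ι → Sab // (fsab g q).isSome} with hQT
  set E := QT → ℝ with hE
  set vecM : DTree ι Sab Unit → E := fun σ q =>
    (sCost σ q.1 : ℝ) - RS g * (if hitS σ q.1 then 1 else 0) with hvecM
  set B : Set E := {x | ∀ q, x q < 0} with hB
  set CH : Set E := convexHull ℝ (Set.range vecM) with hCH
  have hBopen : IsOpen B := by
    have : B = ⋂ q : QT, {x : E | x q < 0} := by
      ext x; simp [hB, Set.mem_iInter]
    rw [this]
    exact isOpen_iInter_of_finite fun q => isOpen_lt (continuous_apply q) continuous_const
  have hBconv : Convex ℝ B := by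
    intro x hx y hy a b ha hb hab q
    have hx' := hx q
    have hy' := hy q
    rcases eq_or_lt_of_le ha with h | h
    · simp only [← h, zero_smul, zero_add]
      have : b = 1 := by linarith
      simpa [this] using hy'
    · rcases eq_or_lt_of_le hb with h' | h'
      · simp only [← h', zero_smul, add_zero]
        have : a = 1 := by linarith
        simpa [this] using hx'
      · have : (a • x + b • y) q = a * x q + b * y q := rfl
        rw [this]
        nlinarith
  have hdisj : Disjoint B CH := by
    rw [Set.disjoint_right]
    intro x hxCH hxB
    rw [hCH, convexHull_eq] at hxCH
    obtain ⟨ιΛ, t, w, z, hw0, hw1, hz, hx⟩ := hxCH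
    set σs : ιΛ → DTree ι Sab Unit := fun l =>
      if h : ∃ σ, vecM σ = z l then Classical.choose h else DTree.leaf () with hσs
    have hzs : ∀ l ∈ t, vecM (σs l) = z l := by
      intro l hl
      obtain ⟨σ0, hσ0⟩ := hz l hl
      have hex : ∃ σ', vecM σ' = z l := ⟨σ0, hσ0⟩
      simp only [hσs, dif_pos hex]
      exact Classical.choose_spec hex
    refine mixed_searcher_lb g t w σs hw0 hw1 hne ?_
    intro q hq
    have hqd : (fsab g q).isSome := by rw [fsab_star hq]; rfl
    have hxq : x ⟨q, hqd⟩ < 0 := hxB ⟨q, hqd⟩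
    have hxq' : x ⟨q, hqd⟩ = ∑ l ∈ t, w l * ((sCost (σs l) q : ℝ) -
        RS g * (if hitS (σs l) q then 1 else 0)) := by
      rw [← hx, Finset.centerMass_eq_of_sum_1 _ _ hw1]
      have : (∑ l ∈ t, w l • z l) ⟨q, hqd⟩ = ∑ l ∈ t, w l * z l ⟨q, hqd⟩ := by
        rw [Finset.sum_apply]
        rfl
      rw [this]
      refine Finset.sum_congr rfl fun l hl => ?_
      rw [← hzs l hl]
    rw [← hxq']
    exact hxq
  obtain ⟨f, u, hfB, hfCH⟩ :=
    geometric_hahn_banach_open hBconv hBopen (convex_convexHull ℝ _) hdisj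
  set φ : QT → ℝ := fun q => f (fun j => if q = j then (1:ℝ) else 0) with hφ
  have hf : ∀ x : E, f x = ∑ q, x q * φ q := by
    intro x
    conv_lhs => rw [pi_eq_sum_univ x]
    rw [map_sum]
    exact Finset.sum_congr rfl fun q _ => by rw [map_smul, smul_eq_mul, hφ]
  have hCH0 : (0 : E) ∈ CH := by
    have h0 : vecM (DTree.leaf ()) = 0 := by
      funext q
      show (sCost (DTree.leaf ()) q.1 : ℝ) - RS g * (if hitS (DTree.leaf ()) q.1 then 1 else 0)
        = (0 : ℝ)
      simp [sCost, hitS]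
    rw [← h0]
    exact subset_convexHull ℝ _ (Set.mem_range_self _)
  have hu0 : u ≤ 0 := by
    have := hfCH 0 hCH0
    rwa [map_zero] at this
  set Sφ : ℝ := ∑ q, φ q with hSφ
  have hφ0 : ∀ q, 0 ≤ φ q := by
    intro q₀'
    by_contra hcon
    push_neg at hcon
    set R : ℝ := max 0 ((u + Sφ + 1) / (-φ q₀')) with hR
    have hR0 : 0 ≤ R := le_max_left _ _
    have hR1 : (u + Sφ + 1) / (-φ q₀') ≤ R := le_max_right _ _
    set bR : E := fun q => (-1 : ℝ) + (if q₀' = q then -R else 0) with hbR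
    have hbRB : bR ∈ B := by
      intro q
      have hq : bR q = -1 + (if q₀' = q then -R else 0) := rfl
      rw [hq]
      split_ifs <;> linarith
    have hfbR : f bR = -Sφ + R * (-φ q₀') := by
      rw [hf]
      have : ∀ q : QT, bR q * φ q = -φ q + (if q₀' = q then -R * φ q else 0) := by
        intro q
        show ((-1 : ℝ) + (if q₀' = q then -R else 0)) * φ q = _
        split_ifs <;> ring
      rw [Finset.sum_congr rfl fun q _ => this q, Finset.sum_add_distrib,
        Finset.sum_neg_distrib, Finset.sum_ite_eq Finset.univ q₀' (fun q => -R * φ q),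
        if_pos (Finset.mem_univ _)]
      ring
    have hlt := hfB bR hbRB
    rw [hfbR] at hlt
    have : (u + Sφ + 1) / (-φ q₀') * (-φ q₀') ≤ R * (-φ q₀') :=
      mul_le_mul_of_nonneg_right hR1 (by linarith)
    rw [div_mul_cancel₀ _ (by linarith : -φ q₀' ≠ 0)] at this
    linarith
  have hSpos : 0 < Sφ := by
    have hb1 : (fun _ => (-1 : ℝ)) ∈ B := fun q => by norm_num
    have := hfB _ hb1
    rw [hf] at this
    have heq : (∑ q : QT, (fun _ => (-1:ℝ)) q * φ q) = -Sφ := by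
      rw [hSφ, ← Finset.sum_neg_distrib]
      exact Finset.sum_congr rfl fun q _ => by ring
    rw [heq] at this
    linarith
  have hupos : 0 ≤ u := by
    by_contra hcon
    push_neg at hcon
    set ε : ℝ := -u / (2 * Sφ) with hε
    have hεpos : 0 < ε := div_pos (by linarith) (by linarith)
    have hbε : (fun _ => -ε : E) ∈ B := fun q => by simp; linarith
    have := hfB _ hbε
    rw [hf] at this
    have heq : (∑ q : QT, (fun _ => (-ε:ℝ)) q * φ q) = -(ε * Sφ) := by
      rw [hSφ, Finset.mul_sum, ← Finset.sum_neg_distrib]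
      exact Finset.sum_congr rfl fun q _ => by ring
    rw [heq] at this
    have : ε * Sφ = -u / 2 := by
      rw [hε]; field_simp
    nlinarith
  refine ⟨fun q => φ q / Sφ, fun q => div_nonneg (hφ0 q) (le_of_lt hSpos), ?_, ?_⟩
  · rw [← Finset.sum_div, ← hSφ, div_self (ne_of_gt hSpos)]
  · intro σ
    have hm := hfCH (vecM σ) (subset_convexHull ℝ _ (Set.mem_range_self σ))
    rw [hf] at hm
    have heq : (∑ q : QT, vecM σ q * φ q)
        = (∑ q : QT, φ q * (sCost σ q.1 : ℝ))
          - RS g * (∑ q : QT, φ q * (if hitS σ q.1 then 1 else 0)) := by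
      rw [Finset.mul_sum, ← Finset.sum_sub_distrib]
      exact Finset.sum_congr rfl fun q _ => by rw [hvecM]; ring
    rw [heq] at hm
    have key : RS g * (∑ q : QT, φ q * (if hitS σ q.1 then 1 else 0))
        ≤ ∑ q : QT, φ q * (sCost σ q.1 : ℝ) := by linarith
    have e1 : (∑ q : QT, φ q / Sφ * (if hitS σ q.1 then 1 else 0))
        = (∑ q : QT, φ q * (if hitS σ q.1 then 1 else 0)) / Sφ := by
      rw [Finset.sum_div]
      exact Finset.sum_congr rfl fun q _ => by ring
    have e2 : (∑ q : QT, φ q / Sφ * (sCost σ q.1 : ℝ))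
        = (∑ q : QT, φ q * (sCost σ q.1 : ℝ)) / Sφ := by
      rw [Finset.sum_div]
      exact Finset.sum_congr rfl fun q _ => by ring
    rw [e1, e2, mul_div_assoc']
    exact (div_le_div_iff_of_pos_right hSpos).mpr key
/-! ### The simulation construction -/

section Sim

variable {κ μ : Type} [DecidableEq κ]

def resolveSym (Z : Bool → μ → Bool) (a : Sab) (j : μ) : Sab :=
  match a with
  | Sab.zero => Sab.ofBool (Z false j)
  | Sab.one => Sab.ofBool (Z true j)
  | Sab.star => Sab.star
  | Sab.dagger => Sab.dagger

def cinput (p : κ → Sab) (Q : κ → μ → Sab) (Z : κ → Bool → μ → Bool) : κ × μ → Sab :=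
  fun ij => if Q ij.1 ij.2 = Sab.zero ∨ Q ij.1 ij.2 = Sab.one then Q ij.1 ij.2
            else resolveSym (Z ij.1) (p ij.1) ij.2

noncomputable def simC (Q : κ → μ → Sab) (Z : κ → Bool → μ → Bool) :
    DTree (κ × μ) Sab Bool → (κ → Option Sab) → DTree κ Sab Bool
  | DTree.leaf b, _ => DTree.leaf b
  | DTree.node ij next, known =>
      if Q ij.1 ij.2 = Sab.zero ∨ Q ij.1 ij.2 = Sab.one then
        simC Q Z (next (Q ij.1 ij.2)) known
      else
        match known ij.1 with
        | some a => simC Q Z (next (resolveSym (Z ij.1) a ij.2)) known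
        | none => DTree.node ij.1 fun a =>
            simC Q Z (next (resolveSym (Z ij.1) a ij.2)) (Function.update known ij.1 (some a))

theorem simC_output (p : κ → Sab) (Q : κ → μ → Sab) (Z : κ → Bool → μ → Bool) :
    ∀ (t : DTree (κ × μ) Sab Bool) (known : κ → Option Sab),
      (∀ i a, known i = some a → p i = a) →
      (simC Q Z t known).output p = t.output (cinput p Q Z) := by
  intro t
  induction t with
  | leaf b => intro known hk; rfl
  | node ij next ih =>
    intro known hk
    have hci : cinput p Q Z ij
        = if Q ij.1 ij.2 = Sab.zero ∨ Q ij.1 ij.2 = Sab.one then Q ij.1 ij.2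
          else resolveSym (Z ij.1) (p ij.1) ij.2 := rfl
    by_cases hbit : Q ij.1 ij.2 = Sab.zero ∨ Q ij.1 ij.2 = Sab.one
    · rw [show simC Q Z (DTree.node ij next) known = simC Q Z (next (Q ij.1 ij.2)) known from by
        rw [simC, if_pos hbit]]
      rw [ih _ known hk]
      show _ = (next (cinput p Q Z ij)).output (cinput p Q Z)
      rw [hci, if_pos hbit]
    · rcases hkn : known ij.1 with _ | a
      · rw [show simC Q Z (DTree.node ij next) known
            = DTree.node ij.1 (fun a => simC Q Z (next (resolveSym (Z ij.1) a ij.2))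
                (Function.update known ij.1 (some a))) from by
          rw [simC, if_neg hbit, hkn]]
        show (simC Q Z (next (resolveSym (Z ij.1) (p ij.1) ij.2))
          (Function.update known ij.1 (some (p ij.1)))).output p = _
        rw [ih _ _ (fun i a ha => by
          by_cases hii : i = ij.1
          · subst hii; rw [Function.update_self] at ha; exact (Option.some_inj.mp ha).symm ▸ rfl
          · exact hk i a (by rwa [Function.update_of_ne hii] at ha))]
        show _ = (next (cinput p Q Z ij)).output (cinput p Q Z)
        rw [hci, if_neg hbit]
      · have hpa : p ij.1 = a := hk ij.1 a hkn
        rw [show simC Q Z (DTree.node ij next) known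
            = simC Q Z (next (resolveSym (Z ij.1) a ij.2)) known from by
          rw [simC, if_neg hbit, hkn]]
        rw [ih _ known hk]
        show _ = (next (cinput p Q Z ij)).output (cinput p Q Z)
        rw [hci, if_neg hbit, hpa]

def blockCost : DTree (κ × μ) Sab Bool → (κ × μ → Sab) → κ → ℕ
  | DTree.leaf _, _, _ => 0
  | DTree.node ij next, x, i => blockCost (next (x ij)) x i + (if ij.1 = i then 1 else 0)

theorem sum_blockCost [Fintype κ] (x : κ × μ → Sab) :
    ∀ t : DTree (κ × μ) Sab Bool, (∑ i, blockCost t x i) = t.cost x := by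
  intro t
  induction t with
  | leaf b => simp [blockCost, DTree.cost]
  | node ij next ih =>
    show (∑ i, (blockCost (next (x ij)) x i + if ij.1 = i then 1 else 0)) = _
    rw [Finset.sum_add_distrib, ih, Finset.sum_ite_eq Finset.univ ij.1 (fun _ => 1),
      if_pos (Finset.mem_univ _)]
    rfl

def hitQ (Q : κ → μ → Sab) : DTree (κ × μ) Sab Bool → (κ × μ → Sab) → κ → Prop
  | DTree.leaf _, _, _ => False
  | DTree.node ij next, x, i =>
      (ij.1 = i ∧ ¬(Q ij.1 ij.2 = Sab.zero ∨ Q ij.1 ij.2 = Sab.one)) ∨ hitQ Q (next (x ij)) x i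

open Classical in
theorem simC_cost [Fintype κ] (p : κ → Sab) (Q : κ → μ → Sab) (Z : κ → Bool → μ → Bool) :
    ∀ (t : DTree (κ × μ) Sab Bool) (known : κ → Option Sab),
      (∀ i a, known i = some a → p i = a) →
      (simC Q Z t known).cost p ≤
        ∑ i, if known i = none ∧ hitQ Q t (cinput p Q Z) i then 1 else 0 := by
  intro t
  induction t with
  | leaf b => intro known hk; simp [simC, DTree.cost]
  | node ij next ih =>
    intro known hk
    have hci : cinput p Q Z ij
        = if Q ij.1 ij.2 = Sab.zero ∨ Q ij.1 ij.2 = Sab.one then Q ij.1 ij.2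
          else resolveSym (Z ij.1) (p ij.1) ij.2 := rfl
    have hmono : ∀ (kn : κ → Option Sab) (a' : Sab),
        (∀ i, (kn i = none ∧ hitQ Q (next a') (cinput p Q Z) i) →
          (known i = none ∧ hitQ Q (DTree.node ij next) (cinput p Q Z) i)) →
        (∑ i, if kn i = none ∧ hitQ Q (next a') (cinput p Q Z) i then 1 else 0) ≤
        ∑ i, if known i = none ∧ hitQ Q (DTree.node ij next) (cinput p Q Z) i then 1 else 0 := by
      intro kn a' himp
      refine Finset.sum_le_sum fun i _ => ?_
      by_cases h : kn i = none ∧ hitQ Q (next a') (cinput p Q Z) i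
      · rw [if_pos h, if_pos (himp i h)]
      · rw [if_neg h]
        split_ifs <;> omega
    have hxij : cinput p Q Z ij = cinput p Q Z (ij.1, ij.2) := by
      cases ij; rfl
    by_cases hbit : Q ij.1 ij.2 = Sab.zero ∨ Q ij.1 ij.2 = Sab.one
    · have hx : cinput p Q Z ij = Q ij.1 ij.2 := by rw [hci, if_pos hbit]
      rw [show simC Q Z (DTree.node ij next) known = simC Q Z (next (Q ij.1 ij.2)) known from by
        rw [simC, if_pos hbit]]
      refine le_trans (ih _ known hk) (hmono known (Q ij.1 ij.2) fun i hi => ?_)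
      refine ⟨hi.1, Or.inr ?_⟩
      rw [hx]
      exact hi.2
    · rcases hkn : known ij.1 with _ | a
      · have hx : cinput p Q Z ij = resolveSym (Z ij.1) (p ij.1) ij.2 := by
          rw [hci, if_neg hbit]
        rw [show simC Q Z (DTree.node ij next) known
            = DTree.node ij.1 (fun a => simC Q Z (next (resolveSym (Z ij.1) a ij.2))
                (Function.update known ij.1 (some a))) from by
          rw [simC, if_neg hbit, hkn]]
        show (simC Q Z (next (resolveSym (Z ij.1) (p ij.1) ij.2))
          (Function.update known ij.1 (some (p ij.1)))).cost p + 1 ≤ _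
        have hk' : ∀ i a, Function.update known ij.1 (some (p ij.1)) i = some a → p i = a := by
          intro i a ha
          by_cases hii : i = ij.1
          · subst hii
            rw [Function.update_self] at ha
            exact Option.some_inj.mp ha
          · exact hk i a (by rwa [Function.update_of_ne hii] at ha)
        refine le_trans (Nat.add_le_add_right (ih _ _ hk') 1) ?_
        have h2 : (∑ i, if Function.update known ij.1 (some (p ij.1)) i = none ∧
              hitQ Q (next (resolveSym (Z ij.1) (p ij.1) ij.2)) (cinput p Q Z) i
              then 1 else 0) + 1
            = ∑ i, ((if Function.update known ij.1 (some (p ij.1)) i = none ∧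
              hitQ Q (next (resolveSym (Z ij.1) (p ij.1) ij.2)) (cinput p Q Z) i
              then 1 else 0) + (if i = ij.1 then 1 else 0)) := by
          rw [Finset.sum_add_distrib, Finset.sum_ite_eq' Finset.univ ij.1 (fun _ => 1),
            if_pos (Finset.mem_univ _)]
        rw [h2]
        refine Finset.sum_le_sum fun i _ => ?_
        by_cases hii : i = ij.1
        · subst hii
          rw [if_pos rfl, if_neg (by rw [Function.update_self]; simp),
            if_pos ⟨hkn, Or.inl ⟨rfl, hbit⟩⟩]
        · rw [if_neg hii, add_zero, Function.update_of_ne hii]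
          by_cases h : known i = none ∧ hitQ Q (next (resolveSym (Z ij.1) (p ij.1) ij.2))
              (cinput p Q Z) i
          · rw [if_pos h, if_pos ⟨h.1, Or.inr (by rw [hx]; exact h.2)⟩]
          · rw [if_neg h]
            split_ifs <;> omega
      · have hpa : p ij.1 = a := hk ij.1 a hkn
        have hx : cinput p Q Z ij = resolveSym (Z ij.1) a ij.2 := by
          rw [hci, if_neg hbit, hpa]
        rw [show simC Q Z (DTree.node ij next) known
            = simC Q Z (next (resolveSym (Z ij.1) a ij.2)) known from by
          rw [simC, if_neg hbit, hkn]]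
        refine le_trans (ih _ known hk) (hmono known _ fun i hi => ?_)
        refine ⟨hi.1, Or.inr ?_⟩
        rw [hx]
        exact hi.2

noncomputable def extract (x : κ × μ → Sab) (i : κ) :
    DTree (κ × μ) Sab Bool → DTree μ Sab Unit
  | DTree.leaf _ => DTree.leaf ()
  | DTree.node ij next =>
      if ij.1 = i then
        DTree.node ij.2 fun a =>
          if a = Sab.zero ∨ a = Sab.one then extract x i (next a) else DTree.leaf ()
      else extract x i (next (x ij))

theorem extract_congr (x x' : κ × μ → Sab) (i : κ)
    (h : ∀ ij : κ × μ, ij.1 ≠ i → x ij = x' ij) :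
    ∀ t, extract x i t = extract x' i t := by
  intro t
  induction t with
  | leaf b => rfl
  | node ij next ih =>
    by_cases hij : ij.1 = i
    · rw [extract, extract, if_pos hij, if_pos hij]
      congr 1
      funext a
      split_ifs
      · exact ih a
      · rfl
    · rw [extract, extract, if_neg hij, if_neg hij, h ij hij]
      exact ih _

theorem extract_spec (Q : κ → μ → Sab) (x : κ × μ → Sab) (i : κ)
    (Hx : ∀ j, (Q i j = Sab.zero ∨ Q i j = Sab.one) → x (i, j) = Q i j) :
    ∀ t : DTree (κ × μ) Sab Bool,
      (hitQ Q t x i ↔ hitS (extract x i t) (fun j => Q i j) = true) ∧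
      sCost (extract x i t) (fun j => Q i j) ≤ blockCost t x i := by
  intro t
  induction t with
  | leaf b => exact ⟨by simp [hitQ, hitS, extract], by simp [sCost, extract, blockCost]⟩
  | node ij next ih =>
    obtain ⟨i', j⟩ := ij
    by_cases hij : i' = i
    · subst hij
      have hext : extract x i' (DTree.node (i', j) next)
          = DTree.node j fun a =>
              if a = Sab.zero ∨ a = Sab.one then extract x i' (next a) else DTree.leaf () := by
        rw [extract, if_pos rfl]
      by_cases hbit : Q i' j = Sab.zero ∨ Q i' j = Sab.one
      · have hnsym : ¬(Q i' j = Sab.star ∨ Q i' j = Sab.dagger) := by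
          rcases hbit with h | h <;> rw [h] <;> simp
        have hxq : x (i', j) = Q i' j := Hx j hbit
        have hchild : (fun a => if a = Sab.zero ∨ a = Sab.one then extract x i' (next a)
            else DTree.leaf ()) (Q i' j) = extract x i' (next (Q i' j)) := by
          simp only [if_pos hbit]
        constructor
        · rw [hext]
          show _ ↔ (if Q i' j = Sab.star ∨ Q i' j = Sab.dagger then true
            else hitS ((fun a => if a = Sab.zero ∨ a = Sab.one then extract x i' (next a)
              else DTree.leaf ()) (Q i' j)) (fun j' => Q i' j')) = true
          rw [if_neg hnsym, hchild]
          show ((i' = i' ∧ ¬(Q i' j = Sab.zero ∨ Q i' j = Sab.one)) ∨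
            hitQ Q (next (x (i', j))) x i') ↔ _
          rw [hxq]
          constructor
          · rintro (⟨_, hc⟩ | h)
            · exact absurd hbit hc
            · exact (ih _).1.mp h
          · intro h
            exact Or.inr ((ih _).1.mpr h)
        · rw [hext]
          show (if Q i' j = Sab.star ∨ Q i' j = Sab.dagger then 1
            else sCost ((fun a => if a = Sab.zero ∨ a = Sab.one then extract x i' (next a)
              else DTree.leaf ()) (Q i' j)) (fun j' => Q i' j') + 1) ≤ _
          rw [if_neg hnsym, hchild]
          show _ ≤ blockCost (next (x (i', j))) x i' + (if i' = i' then 1 else 0)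
          rw [if_pos rfl, hxq]
          exact Nat.add_le_add_right (ih _).2 1
      · have hsym : Q i' j = Sab.star ∨ Q i' j = Sab.dagger := by
          rcases hq : Q i' j with h | h | h | h
          · exact absurd (Or.inl hq) hbit
          · exact absurd (Or.inr hq) hbit
          · exact Or.inl rfl
          · exact Or.inr rfl
        constructor
        · rw [hext]
          show _ ↔ (if Q i' j = Sab.star ∨ Q i' j = Sab.dagger then true else _) = true
          rw [if_pos hsym]
          simp only [iff_true]
          exact Or.inl ⟨rfl, hbit⟩
        · rw [hext]
          show (if Q i' j = Sab.star ∨ Q i' j = Sab.dagger then 1 else _) ≤ _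
          rw [if_pos hsym]
          show 1 ≤ blockCost (next (x (i', j))) x i' + (if i' = i' then 1 else 0)
          rw [if_pos rfl]
          omega
    · have hext : extract x i (DTree.node (i', j) next) = extract x i (next (x (i', j))) := by
        rw [extract, if_neg hij]
      constructor
      · rw [hext]
        show ((i' = i ∧ _) ∨ hitQ Q (next (x (i', j))) x i) ↔ _
        constructor
        · rintro (⟨hc, _⟩ | h)
          · exact absurd hc hij
          · exact (ih _).1.mp h
        · intro h
          exact Or.inr ((ih _).1.mpr h)
      · rw [hext]
        show _ ≤ blockCost (next (x (i', j))) x i + (if i' = i then 1 else 0)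
        rw [if_neg hij, add_zero]
        exact (ih _).2

end Sim
/-! ### Domain of the composed sabotage problem -/

theorem exists_completions {ι : Type} {g : PFn ι Bool Bool} {q : ι → Sab}
    (h : (fsab g q).isSome) :
    ∃ z : Bool → ι → Bool, (∀ b, SabConsistent q (z b)) ∧ (∀ b, g (z b) = some b) := by
  obtain ⟨b0, hb0⟩ := Option.isSome_iff_exists.mp h
  have hsab : (∃ x y, (g x).isSome ∧ (g y).isSome ∧ g x ≠ g y ∧
      SabConsistent q x ∧ SabConsistent q y) := by
    rcases fsab_cases hb0 with ⟨hs, _⟩ | ⟨hs, _⟩ <;> exact hs.2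
  obtain ⟨x, y, hx, hy, hxy, hcx, hcy⟩ := hsab
  obtain ⟨bx, hbx⟩ := Option.isSome_iff_exists.mp hx
  obtain ⟨by', hby⟩ := Option.isSome_iff_exists.mp hy
  have hbxy : bx ≠ by' := by
    intro hc
    rw [hbx, hby, hc] at hxy
    exact hxy rfl
  refine ⟨fun b => if bx = b then x else y, fun b => ?_, fun b => ?_⟩
  · show SabConsistent q (if bx = b then x else y)
    by_cases hb : bx = b
    · rw [if_pos hb]; exact hcx
    · rw [if_neg hb]; exact hcy
  · show g (if bx = b then x else y) = some b
    by_cases hb : bx = b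
    · rw [if_pos hb, hbx, hb]
    · rw [if_neg hb, hby]
      cases bx <;> cases by' <;> cases b <;> simp_all

section DomLemma

variable {κ μ : Type} [DecidableEq κ]

theorem cinput_isSab (f : PFn κ Bool Bool) (g : PFn μ Bool Bool) {s : Sab}
    (hs : s = Sab.star ∨ s = Sab.dagger)
    (p : κ → Sab) (Q : κ → μ → Sab) (Z : κ → Bool → μ → Bool)
    (hp : IsSabotaged f s p)
    (hZc : ∀ i b, SabConsistent (Q i) (Z i b))
    (hZv : ∀ i b, g (Z i b) = some b) :
    IsSabotaged (pcomp f g) s (cinput p Q Z) := by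
  obtain ⟨hent, xw, yw, hxw, hyw, hxyw, hcx, hcy⟩ := hp
  constructor
  · rintro ⟨i, j⟩
    have hc : cinput p Q Z (i, j) = if Q i j = Sab.zero ∨ Q i j = Sab.one then Q i j
      else resolveSym (Z i) (p i) j := rfl
    rw [hc]
    by_cases hbit : Q i j = Sab.zero ∨ Q i j = Sab.one
    · rw [if_pos hbit]; tauto
    · rw [if_neg hbit]
      rcases hent i with h' | h' | h'
      · rw [h']
        show resolveSym (Z i) Sab.zero j = _ ∨ _
        rw [show resolveSym (Z i) Sab.zero j = Sab.ofBool (Z i false j) from rfl]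
        cases hz : Z i false j <;> simp [Sab.ofBool]
      · rw [h']
        rw [show resolveSym (Z i) Sab.one j = Sab.ofBool (Z i true j) from rfl]
        cases hz : Z i true j <;> simp [Sab.ofBool]
      · rw [h']
        rcases hs with h'' | h'' <;> rw [h''] <;> simp [resolveSym]
  · have hW : ∀ w : κ → Bool, pcomp f g (fun ij : κ × μ => Z ij.1 (w ij.1) ij.2) = f w := by
      intro w
      have hall : ∀ i : κ, (g fun j => (fun ij : κ × μ => Z ij.1 (w ij.1) ij.2) (i, j)).isSome := by
        intro i
        show (g (Z i (w i))).isSome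
        rw [hZv i (w i)]; rfl
      simp only [pcomp]
      rw [dif_pos hall]
      congr 1
      funext i
      have h1 : some ((g fun j => (fun ij : κ × μ => Z ij.1 (w ij.1) ij.2) (i, j)).get (hall i))
          = g (Z i (w i)) := Option.some_get _
      exact Option.some_inj.mp (h1.trans (hZv i (w i)))
    have hcons : ∀ w : κ → Bool, SabConsistent p w →
        SabConsistent (cinput p Q Z) (fun ij : κ × μ => Z ij.1 (w ij.1) ij.2) := by
      intro w hw
      rintro ⟨i, j⟩
      show cinput p Q Z (i, j) = Sab.ofBool (Z i (w i) j) ∨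
        cinput p Q Z (i, j) = Sab.star ∨ cinput p Q Z (i, j) = Sab.dagger
      have hc : cinput p Q Z (i, j) = if Q i j = Sab.zero ∨ Q i j = Sab.one then Q i j
        else resolveSym (Z i) (p i) j := rfl
      rw [hc]
      by_cases hbit : Q i j = Sab.zero ∨ Q i j = Sab.one
      · rw [if_pos hbit]
        rcases hZc i (w i) j with h' | h' | h'
        · exact Or.inl h'
        · rcases hbit with hb | hb <;> rw [hb] at h' <;> simp at h'
        · rcases hbit with hb | hb <;> rw [hb] at h' <;> simp at h'
      · rw [if_neg hbit]
        rcases hw i with h' | h' | h'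
        · rw [h']
          rcases hwb : w i with _ | _ <;> left <;> rfl
        · rw [h']; right; left; rfl
        · rw [h']; right; right; rfl
    refine ⟨fun ij => Z ij.1 (xw ij.1) ij.2, fun ij => Z ij.1 (yw ij.1) ij.2, ?_, ?_, ?_, ?_, ?_⟩
    · rw [hW xw]; exact hxw
    · rw [hW yw]; exact hyw
    · rw [hW xw, hW yw]; exact hxyw
    · exact hcons xw hcx
    · exact hcons yw hcy

theorem cinput_dom (f : PFn κ Bool Bool) (g : PFn μ Bool Bool)
    (p : κ → Sab) (Q : κ → μ → Sab) (Z : κ → Bool → μ → Bool) {bp : Bool}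
    (hp : fsab f p = some bp)
    (hQ : ∀ i, (fsab g (Q i)).isSome)
    (hZc : ∀ i b, SabConsistent (Q i) (Z i b))
    (hZv : ∀ i b, g (Z i b) = some b) :
    fsab (pcomp f g) (cinput p Q Z) = some bp := by
  rcases fsab_cases hp with ⟨hs, hb⟩ | ⟨hs, hb⟩
  · rw [hb, fsab_star (cinput_isSab f g (Or.inl rfl) p Q Z hs hZc hZv)]
  · rw [hb, fsab_dagger (cinput_isSab f g (Or.inr rfl) p Q Z hs hZc hZv)]

end DomLemma

/-! ### Trivial upper bound and degenerate cases -/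

theorem trivial_mem {ι : Type} [Fintype ι] [DecidableEq ι] (g : PFn ι Sab Bool)
    (hg : ∀ q b, g q = some b →
      (allTree Finset.univ.toList (fun _ => none)).output q = b) :
    ∃ T : ℝ, 0 ≤ T ∧ ∃ A : RandAlg ι Sab Bool, A.Computes g 0 ∧ A.ECostLe g T := by
  refine ⟨(Fintype.card ι : ℝ), Nat.cast_nonneg _,
    { Ω := PUnit
      fin := inferInstance
      p := fun _ => 1
      nonneg := fun _ => one_pos.le
      sum_one := by simp
      tree := fun _ => allTree Finset.univ.toList (fun _ => none) }, ?_, ?_⟩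
  · exact computes_of_support _ _ fun x b hx ω _ => hg x b hx
  · intro x hx
    show (∑ _ω : PUnit, 1 * ((allTree Finset.univ.toList
      (fun _ : ι => (none : Option Sab))).cost x : ℝ)) ≤ _
    rw [allTree_cost, Finset.length_toList]
    simp

theorem RS_eq_zero {ι : Type} (g : PFn ι Bool Bool) (h : ¬ ∃ q, IsSabotaged g Sab.star q) :
    RS g = 0 := by
  have hdom : ∀ q, ¬ (fsab g q).isSome := by
    intro q hq
    obtain ⟨b, hb⟩ := Option.isSome_iff_exists.mp hq
    rcases fsab_cases hb with ⟨hs, _⟩ | ⟨hs, _⟩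
    · exact h ⟨q, hs⟩
    · exact h ⟨starify q, starify_isSab hs⟩
  refine le_antisymm ?_ (RS_nonneg g)
  refine R0_le _ le_rfl
    { Ω := PUnit
      fin := inferInstance
      p := fun _ => 1
      nonneg := fun _ => one_pos.le
      sum_one := by simp
      tree := fun _ => DTree.leaf true } ?_ ?_
  · exact computes_of_support _ _ fun x b hx ω _ => absurd (by rw [hx]; rfl) (hdom x)
  · intro x hx
    exact absurd hx (hdom x)
/-! ### Per-block accounting against the hard distribution -/

open Classical in
theorem block_bound {κ μ QT : Type} [DecidableEq κ] [Fintype κ] [Fintype QT]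
    (val : QT → μ → Sab) (D : QT → ℝ) (hD0 : ∀ k, 0 ≤ D k) (RSg : ℝ)
    (hard : ∀ σ : DTree μ Sab Unit,
      RSg * (∑ k, D k * (if hitS σ (val k) then 1 else 0)) ≤ ∑ k, D k * (sCost σ (val k) : ℝ))
    (p : κ → Sab) (zf : QT → Bool → μ → Bool) (t : DTree (κ × μ) Sab Bool)
    (k₀ : QT) (i : κ) :
    RSg * (∑ v : κ → QT, (∏ i', D (v i')) *
        (if hitQ (fun i' => val (v i')) t
            (cinput p (fun i' => val (v i')) (fun i' => zf (v i'))) i then 1 else 0))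
      ≤ ∑ v : κ → QT, (∏ i', D (v i')) *
        (blockCost t (cinput p (fun i' => val (v i')) (fun i' => zf (v i'))) i : ℝ) := by
  classical
  set X : (κ → QT) → (κ × μ → Sab) :=
    fun v => cinput p (fun i' => val (v i')) (fun i' => zf (v i')) with hX
  set e := Equiv.funSplitAt i QT with he
  have hvi : ∀ (k : QT) (u : {j // j ≠ i} → QT), e.symm (k, u) i = k := by
    intro k u
    show (Equiv.funSplitAt i QT).symm (k, u) i = k
    simp [Equiv.funSplitAt_symm_apply]
  have hvj : ∀ (k : QT) (u : {j // j ≠ i} → QT) (j : κ) (hj : j ≠ i),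
      e.symm (k, u) j = u ⟨j, hj⟩ := by
    intro k u j hj
    show (Equiv.funSplitAt i QT).symm (k, u) j = u ⟨j, hj⟩
    simp [Equiv.funSplitAt_symm_apply, hj]
  have swap : ∀ G : (κ → QT) → ℝ, (∑ v, G v)
      = ∑ u : {j // j ≠ i} → QT, ∑ k : QT, G (e.symm (k, u)) := by
    intro G
    rw [← Equiv.sum_comp e.symm G, Fintype.sum_prod_type]
    exact Finset.sum_comm
  rw [Finset.mul_sum,
    swap (fun v : κ → QT => RSg * ((∏ i', D (v i')) *
      (if hitQ (fun i' => val (v i')) t (X v) i then (1:ℝ) else 0))),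
    swap (fun v : κ → QT => (∏ i', D (v i')) * (blockCost t (X v) i : ℝ))]
  refine Finset.sum_le_sum fun u _ => ?_
  set σu : DTree μ Sab Unit := extract (X (e.symm (k₀, u))) i t with hσu
  set Pu : ℝ := ∏ i' ∈ Finset.univ.erase i, D (e.symm (k₀, u) i') with hPu
  have hPu0 : 0 ≤ Pu := Finset.prod_nonneg fun j _ => hD0 _
  have hXcong : ∀ k, ∀ ij : κ × μ, ij.1 ≠ i → X (e.symm (k, u)) ij = X (e.symm (k₀, u)) ij := by
    intro k ij hij
    have hv : e.symm (k, u) ij.1 = e.symm (k₀, u) ij.1 := by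
      rw [hvj k u ij.1 hij, hvj k₀ u ij.1 hij]
    have h1 : X (e.symm (k, u)) ij
        = if val (e.symm (k, u) ij.1) ij.2 = Sab.zero ∨ val (e.symm (k, u) ij.1) ij.2 = Sab.one
          then val (e.symm (k, u) ij.1) ij.2
          else resolveSym (zf (e.symm (k, u) ij.1)) (p ij.1) ij.2 := rfl
    have h2 : X (e.symm (k₀, u)) ij
        = if val (e.symm (k₀, u) ij.1) ij.2 = Sab.zero ∨ val (e.symm (k₀, u) ij.1) ij.2 = Sab.one
          then val (e.symm (k₀, u) ij.1) ij.2
          else resolveSym (zf (e.symm (k₀, u) ij.1)) (p ij.1) ij.2 := rfl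
    rw [h1, h2, hv]
  have hfacts : ∀ k,
      ((∏ i', D (e.symm (k, u) i')) = D k * Pu) ∧
      (hitQ (fun i' => val (e.symm (k, u) i')) t (X (e.symm (k, u))) i
        ↔ hitS σu (val k) = true) ∧
      ((sCost σu (val k) : ℝ) ≤ (blockCost t (X (e.symm (k, u))) i : ℝ)) := by
    intro k
    have hext : extract (X (e.symm (k, u))) i t = σu :=
      extract_congr _ _ i (hXcong k) t
    have hHx : ∀ j : μ, ((fun i' => val (e.symm (k, u) i')) i j = Sab.zero ∨
        (fun i' => val (e.symm (k, u) i')) i j = Sab.one) →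
        X (e.symm (k, u)) (i, j) = (fun i' => val (e.symm (k, u) i')) i j := by
      intro j hj
      have h1 : X (e.symm (k, u)) (i, j)
          = if val (e.symm (k, u) i) j = Sab.zero ∨ val (e.symm (k, u) i) j = Sab.one
            then val (e.symm (k, u) i) j
            else resolveSym (zf (e.symm (k, u) i)) (p i) j := rfl
      rw [h1, if_pos hj]
    have spec := extract_spec (fun i' => val (e.symm (k, u) i')) (X (e.symm (k, u))) i hHx t
    refine ⟨?_, ?_, ?_⟩
    · rw [← Finset.mul_prod_erase Finset.univ (fun i' => D (e.symm (k, u) i'))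
        (Finset.mem_univ i)]
      congr 1
      · rw [hvi k u]
      · refine Finset.prod_congr rfl fun j hj => ?_
        rw [hvj k u j (Finset.mem_erase.mp hj).1, hvj k₀ u j (Finset.mem_erase.mp hj).1]
    · have h1 := spec.1
      rw [hext] at h1
      have h2 : (fun j => val (e.symm (k, u) i) j) = val k := by
        funext j; rw [hvi k u]
      rw [h2] at h1
      exact h1
    · have h2 := spec.2
      rw [hext] at h2
      have h3 : (fun j => val (e.symm (k, u) i) j) = val k := by
        funext j; rw [hvi k u]
      rw [h3] at h2
      exact_mod_cast h2
  calc (∑ k, RSg * ((∏ i', D (e.symm (k, u) i')) *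
        (if hitQ (fun i' => val (e.symm (k, u) i')) t (X (e.symm (k, u))) i
          then (1:ℝ) else 0)))
      = ∑ k, (RSg * (D k * (if hitS σu (val k) then (1:ℝ) else 0))) * Pu := by
        refine Finset.sum_congr rfl fun k _ => ?_
        rw [(hfacts k).1, if_congr (hfacts k).2.1 rfl rfl]
        ring
    _ = (RSg * ∑ k, D k * (if hitS σu (val k) then (1:ℝ) else 0)) * Pu := by
        rw [← Finset.sum_mul, Finset.mul_sum]
    _ ≤ (∑ k, D k * (sCost σu (val k) : ℝ)) * Pu :=
        mul_le_mul_of_nonneg_right (hard σu) hPu0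
    _ ≤ ∑ k, (∏ i', D (e.symm (k, u) i')) * (blockCost t (X (e.symm (k, u))) i : ℝ) := by
        rw [Finset.sum_mul]
        refine Finset.sum_le_sum fun k _ => ?_
        rw [(hfacts k).1]
        have := (hfacts k).2.2
        have hD := hD0 k
        nlinarith [mul_le_mul_of_nonneg_left this hD, mul_le_mul_of_nonneg_right
          (mul_le_mul_of_nonneg_left this hD) hPu0]
end RSComp
/-- **Perfect composition of randomized sabotage complexity:**
`RS(f ∘ g) ≥ RS(f) · RS(g)` for all partial Boolean functions `f` and `g`. -/
theorem RS_composition {n m : ℕ} (f : PFn (Fin n) Bool Bool)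
    (g : PFn (Fin m) Bool Bool) :
    RS f * RS g ≤ RS (pcomp f g) := by
  classical
  rcases le_or_gt (RS g) 0 with hg0 | hg0
  · have hg : RS g = 0 := le_antisymm hg0 (RSComp.RS_nonneg g)
    rw [hg, mul_zero]
    exact RSComp.R0_nonneg _
  have hstar : ∃ q, IsSabotaged g Sab.star q := by
    by_contra h
    rw [RSComp.RS_eq_zero g h] at hg0
    exact lt_irrefl _ hg0
  obtain ⟨D, hD0, hD1, hDh⟩ := RSComp.exists_hard_dist g hstar
  obtain ⟨q₀, hq₀⟩ := hstar
  have hq₀d : (fsab g q₀).isSome := by rw [RSComp.fsab_star hq₀]; rfl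
  set k₀ : {q : Fin m → Sab // (fsab g q).isSome} := ⟨q₀, hq₀d⟩ with hk₀
  set zc : {q : Fin m → Sab // (fsab g q).isSome} → Bool → Fin m → Bool :=
    fun k => Classical.choose (RSComp.exists_completions k.2) with hzc
  have hzc1 : ∀ (k : {q : Fin m → Sab // (fsab g q).isSome}) (b : Bool),
      SabConsistent k.1 (zc k b) :=
    fun k => (Classical.choose_spec (RSComp.exists_completions k.2)).1
  have hzc2 : ∀ (k : {q : Fin m → Sab // (fsab g q).isSome}) (b : Bool),
      g (zc k b) = some b :=
    fun k => (Classical.choose_spec (RSComp.exists_completions k.2)).2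
  obtain ⟨T₀, hT₀⟩ := RSComp.trivial_mem (fsab (pcomp f g))
    (fun q b hq => RSComp.allTree_correct (pcomp f g) hq)
  refine le_csInf ⟨T₀, hT₀⟩ ?_
  rintro T ⟨hT0, A, hAc, hAe⟩
  letI := A.fin
  set C : RandAlg (Fin n) Sab Bool :=
    { Ω := A.Ω × (Fin n → {q : Fin m → Sab // (fsab g q).isSome})
      fin := inferInstance
      p := fun ωv => A.p ωv.1 * ∏ i, D (ωv.2 i)
      nonneg := fun ωv => mul_nonneg (A.nonneg _) (Finset.prod_nonneg fun i _ => hD0 _)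
      sum_one := by
        rw [Fintype.sum_prod_type]
        have hrow : ∀ ω, (∑ v : Fin n → {q : Fin m → Sab // (fsab g q).isSome},
            A.p ω * ∏ i, D (v i)) = A.p ω := by
          intro ω
          rw [← Finset.mul_sum, RSComp.sum_prod_pow, hD1, one_pow, mul_one]
        rw [Finset.sum_congr rfl fun ω _ => hrow ω, A.sum_one]
      tree := fun ωv => RSComp.simC (fun i => (ωv.2 i).1) (fun i => zc (ωv.2 i))
        (A.tree ωv.1) (fun _ => none) } with hC
  have hCc : C.Computes (fsab f) 0 := by
    refine RSComp.computes_of_support _ _ ?_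
    intro p b hp ωv hne
    have hAω : A.p ωv.1 ≠ 0 := fun h => hne (by show A.p ωv.1 * _ = 0; rw [h, zero_mul])
    have hdom := RSComp.cinput_dom f g p (fun i => (ωv.2 i).1) (fun i => zc (ωv.2 i)) hp
      (fun i => (ωv.2 i).2) (fun i b' => hzc1 _ b') (fun i b' => hzc2 _ b')
    show (RSComp.simC (fun i => (ωv.2 i).1) (fun i => zc (ωv.2 i)) (A.tree ωv.1)
      (fun _ => none)).output p = b
    rw [RSComp.simC_output p _ _ _ _ (fun i a h => by simp at h)]
    exact RSComp.support_correct A _ hAc hdom ωv.1 hAω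
  have hCe : C.ECostLe (fsab f) (T / RS g) := by
    intro p hp
    rw [le_div_iff₀ hg0]
    obtain ⟨b, hb⟩ := Option.isSome_iff_exists.mp hp
    have hdomv : ∀ v : Fin n → {q : Fin m → Sab // (fsab g q).isSome},
        (fsab (pcomp f g) (RSComp.cinput p (fun i' => (v i').1)
          (fun i' => zc (v i')))).isSome := by
      intro v
      rw [RSComp.cinput_dom f g p (fun i => (v i).1) (fun i => zc (v i)) hb
        (fun i => (v i).2) (fun i b' => hzc1 _ b') (fun i b' => hzc2 _ b')]
      rfl
    have step1 : ∀ (ω : A.Ω) (v : Fin n → {q : Fin m → Sab // (fsab g q).isSome}),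
        ((RSComp.simC (fun i => (v i).1) (fun i => zc (v i)) (A.tree ω)
          (fun _ => none)).cost p : ℝ)
        ≤ ∑ i : Fin n, (if RSComp.hitQ (fun i' => (v i').1) (A.tree ω)
            (RSComp.cinput p (fun i' => (v i').1) (fun i' => zc (v i'))) i
            then (1:ℝ) else 0) := by
      intro ω v
      have h := RSComp.simC_cost p (fun i => (v i).1) (fun i => zc (v i)) (A.tree ω)
        (fun _ => none) (fun i a h => by simp at h)
      refine le_trans (Nat.cast_le.mpr h) ?_
      rw [Nat.cast_sum]
      refine le_of_eq (Finset.sum_congr rfl fun i _ => ?_)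
      by_cases hh : RSComp.hitQ (fun i' => (v i').1) (A.tree ω)
          (RSComp.cinput p (fun i' => (v i').1) (fun i' => zc (v i'))) i
      · rw [if_pos ⟨rfl, hh⟩, if_pos hh]; norm_num
      · rw [if_neg (fun hc => hh hc.2), if_neg hh]; norm_num
    have step2 : ∀ ω : A.Ω,
        RS g * (∑ v : Fin n → {q : Fin m → Sab // (fsab g q).isSome}, (∏ i, D (v i)) *
          (∑ i : Fin n, if RSComp.hitQ (fun i' => (v i').1) (A.tree ω)
            (RSComp.cinput p (fun i' => (v i').1) (fun i' => zc (v i'))) i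
            then (1:ℝ) else 0))
        ≤ ∑ v : Fin n → {q : Fin m → Sab // (fsab g q).isSome}, (∏ i, D (v i)) *
            ((A.tree ω).cost (RSComp.cinput p (fun i' => (v i').1)
              (fun i' => zc (v i'))) : ℝ) := by
      intro ω
      have e1 : (∑ v : Fin n → {q : Fin m → Sab // (fsab g q).isSome}, (∏ i, D (v i)) *
          (∑ i : Fin n, if RSComp.hitQ (fun i' => (v i').1) (A.tree ω)
            (RSComp.cinput p (fun i' => (v i').1) (fun i' => zc (v i'))) i
            then (1:ℝ) else 0))
          = ∑ i : Fin n, ∑ v : Fin n → {q : Fin m → Sab // (fsab g q).isSome},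
              (∏ i', D (v i')) * (if RSComp.hitQ (fun i' => (v i').1) (A.tree ω)
                (RSComp.cinput p (fun i' => (v i').1) (fun i' => zc (v i'))) i
                then (1:ℝ) else 0) := by
        rw [Finset.sum_congr rfl fun v _ => Finset.mul_sum Finset.univ _ _]
        exact Finset.sum_comm
      rw [e1, Finset.mul_sum]
      have e2 : (∑ v : Fin n → {q : Fin m → Sab // (fsab g q).isSome}, (∏ i, D (v i)) *
            ((A.tree ω).cost (RSComp.cinput p (fun i' => (v i').1)
              (fun i' => zc (v i'))) : ℝ))
          = ∑ i : Fin n, ∑ v : Fin n → {q : Fin m → Sab // (fsab g q).isSome},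
              (∏ i', D (v i')) * (RSComp.blockCost (A.tree ω)
                (RSComp.cinput p (fun i' => (v i').1) (fun i' => zc (v i'))) i : ℝ) := by
        rw [Finset.sum_congr rfl fun v _ => ?_]
        · exact Finset.sum_comm
        · rw [← RSComp.sum_blockCost (RSComp.cinput p (fun i' => (v i').1)
            (fun i' => zc (v i'))) (A.tree ω), Nat.cast_sum, Finset.mul_sum]
      rw [e2]
      refine Finset.sum_le_sum fun i _ => ?_
      exact RSComp.block_bound (fun k => k.1) D hD0 (RS g) hDh p zc (A.tree ω) k₀ i
    calc C.expCost p * RS g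
        = ∑ ω, A.p ω * (RS g *
            (∑ v : Fin n → {q : Fin m → Sab // (fsab g q).isSome}, (∏ i, D (v i)) *
              ((RSComp.simC (fun i => (v i).1) (fun i => zc (v i)) (A.tree ω)
                (fun _ => none)).cost p : ℝ))) := by
          show (∑ ωv : A.Ω × (Fin n → {q : Fin m → Sab // (fsab g q).isSome}),
            (A.p ωv.1 * ∏ i, D (ωv.2 i)) *
              ((RSComp.simC (fun i => (ωv.2 i).1) (fun i => zc (ωv.2 i)) (A.tree ωv.1)
                (fun _ => none)).cost p : ℝ)) * RS g = _
          rw [Fintype.sum_prod_type, Finset.sum_mul]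
          refine Finset.sum_congr rfl fun ω _ => ?_
          rw [Finset.mul_sum, Finset.mul_sum, Finset.sum_mul]
          refine Finset.sum_congr rfl fun v _ => ?_
          ring
      _ ≤ ∑ ω, A.p ω * (RS g *
            (∑ v : Fin n → {q : Fin m → Sab // (fsab g q).isSome}, (∏ i, D (v i)) *
              (∑ i : Fin n, if RSComp.hitQ (fun i' => (v i').1) (A.tree ω)
                (RSComp.cinput p (fun i' => (v i').1) (fun i' => zc (v i'))) i
                then (1:ℝ) else 0))) := by
          refine Finset.sum_le_sum fun ω _ => ?_
          refine mul_le_mul_of_nonneg_left ?_ (A.nonneg ω)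
          refine mul_le_mul_of_nonneg_left ?_ hg0.le
          refine Finset.sum_le_sum fun v _ => ?_
          exact mul_le_mul_of_nonneg_left (step1 ω v)
            (Finset.prod_nonneg fun i _ => hD0 _)
      _ ≤ ∑ ω, A.p ω *
            (∑ v : Fin n → {q : Fin m → Sab // (fsab g q).isSome}, (∏ i, D (v i)) *
              ((A.tree ω).cost (RSComp.cinput p (fun i' => (v i').1)
                (fun i' => zc (v i'))) : ℝ)) := by
          refine Finset.sum_le_sum fun ω _ => ?_
          exact mul_le_mul_of_nonneg_left (step2 ω) (A.nonneg ω)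
      _ = ∑ v : Fin n → {q : Fin m → Sab // (fsab g q).isSome}, (∏ i, D (v i)) *
            (∑ ω, A.p ω * ((A.tree ω).cost (RSComp.cinput p (fun i' => (v i').1)
              (fun i' => zc (v i'))) : ℝ)) := by
          rw [Finset.sum_congr rfl fun ω _ => Finset.mul_sum Finset.univ _ _,
            Finset.sum_comm]
          refine Finset.sum_congr rfl fun v _ => ?_
          rw [Finset.mul_sum]
          refine Finset.sum_congr rfl fun ω _ => ?_
          ring
      _ ≤ ∑ v : Fin n → {q : Fin m → Sab // (fsab g q).isSome}, (∏ i, D (v i)) * T := by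
          refine Finset.sum_le_sum fun v _ => ?_
          refine mul_le_mul_of_nonneg_left ?_ (Finset.prod_nonneg fun i _ => hD0 _)
          exact hAe _ (hdomv v)
      _ = T := by
          rw [← Finset.sum_mul, RSComp.sum_prod_pow, hD1, one_pow, one_mul]
  have hRf : RS f ≤ T / RS g :=
    RSComp.R0_le (fsab f) (div_nonneg hT0 hg0.le) C hCc hCe
  calc RS f * RS g ≤ (T / RS g) * RS g := mul_le_mul_of_nonneg_right hRf hg0.le
    _ = T := div_mul_cancel₀ T (ne_of_gt hg0)
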